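/- arXiv:1907.00800 — 3 statements merged into one kernel-verified Lean document; each statement's English description precedes it below -/
import Mathlib

section
/- Weighted argument principle: let f be meromorphic and not identically zero on a neighborhood of the closed disc B̄(s₀, u), with no zeros or poles on the boundary circle. Then (1/(2πi)) ∮_{∂B(s₀,u)} (s - s₀) · f'(s)/f(s) ds = Σ_ρ ord_ρ(f) · (ρ - s₀), where the sum runs over zeros and poles ρ of f inside the disc, ord_ρ(f) being the order of the zero (positive) or pole (negative) at ρ. -/
open Complex Metric

private lemma analyticAt_zpow_sub {σ z : ℂ} (h : z ≠ σ) (n : ℤ) :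
    AnalyticAt ℂ (fun s => (s - σ) ^ n) z := by
  have hb : AnalyticAt ℂ (fun s : ℂ => s - σ) z := analyticAt_id.sub analyticAt_const
  have hb0 : z - σ ≠ 0 := sub_ne_zero.2 h
  rcases n with m | m
  · simpa using hb.fun_pow m
  · have := (hb.fun_pow (m + 1)).fun_inv (pow_ne_zero _ hb0)
    simpa [zpow_negSucc] using this

private lemma circleIntegrable_finset_sum {ι : Type*} (t : Finset ι) (F : ι → ℂ → ℂ)
    {c : ℂ} {R : ℝ} (h : ∀ i ∈ t, CircleIntegrable (F i) c R) :
    CircleIntegrable (fun z => ∑ i ∈ t, F i z) c R := by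
  classical
  induction t using Finset.cons_induction with
  | empty => simpa using circleIntegrable_const (0 : ℂ) c R
  | cons a s ha ih =>
    simp only [Finset.sum_cons]
    exact (h a (Finset.mem_cons_self a s)).add
      (ih fun i hi => h i (Finset.mem_cons_of_mem hi))

private lemma circleIntegral_add' {f g : ℂ → ℂ} {c : ℂ} {R : ℝ}
    (hf : CircleIntegrable f c R) (hg : CircleIntegrable g c R) :
    (∮ z in C(c, R), (f z + g z)) = (∮ z in C(c, R), f z) + ∮ z in C(c, R), g z := by
  simp only [circleIntegral, smul_add, intervalIntegral.integral_add hf.out hg.out]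

private lemma circleIntegral_finset_sum {ι : Type*} (t : Finset ι) (F : ι → ℂ → ℂ)
    {c : ℂ} {R : ℝ} (h : ∀ i ∈ t, CircleIntegrable (F i) c R) :
    (∮ z in C(c, R), ∑ i ∈ t, F i z) = ∑ i ∈ t, ∮ z in C(c, R), F i z := by
  classical
  induction t using Finset.cons_induction with
  | empty => simp [circleIntegral]
  | cons a s ha ih =>
    simp only [Finset.sum_cons]
    rw [circleIntegral_add' (h a (Finset.mem_cons_self a s))
      (circleIntegrable_finset_sum s F fun i hi => h i (Finset.mem_cons_of_mem hi)),
      ih fun i hi => h i (Finset.mem_cons_of_mem hi)]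

/-- Weighted argument principle: the contour integral of `(s - s₀) f'(s)/f(s)` over the
circle `∂B(s₀, u)` picks up the multiplicity-weighted sum of locations of zeros and poles. -/
theorem weighted_argument_principle
    (f : ℂ → ℂ) (U : Set ℂ) (hU : IsOpen U) (s₀ : ℂ) (u : ℝ) (hu : 0 < u)
    (hUB : closedBall s₀ u ⊆ U)
    (Z : Finset ℂ) (hZ : (Z : Set ℂ) ⊆ ball s₀ u)
    (ord : ℂ → ℤ)
    (hf : AnalyticOnNhd ℂ f (U \ (Z : Set ℂ)))
    (hne : ∀ s ∈ closedBall s₀ u \ (Z : Set ℂ), f s ≠ 0)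
    (hord : ∀ ρ ∈ Z, ∃ h : MeromorphicAt f ρ, meromorphicOrderAt f ρ = (ord ρ : WithTop ℤ)) :
    (2 * Real.pi * Complex.I)⁻¹ * (∮ s in C(s₀, u), (s - s₀) * (deriv f s / f s)) =
      ∑ ρ ∈ Z, (ord ρ : ℂ) * (ρ - s₀) := by
  classical
  set P : ℂ → ℂ := fun s => ∏ ρ ∈ Z, (s - ρ) ^ (-ord ρ) with hP
  set g : ℂ → ℂ := fun s => f s * P s with hg
  -- analyticity of `P` away from `Z`
  have hPan : ∀ z : ℂ, z ∉ Z → AnalyticAt ℂ P z := fun z hz =>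
    Finset.analyticAt_fun_prod _ fun σ hσ =>
      analyticAt_zpow_sub (fun h => hz (by rw [h]; exact hσ)) _
  have hPne : ∀ z : ℂ, z ∉ Z → P z ≠ 0 := fun z hz =>
    Finset.prod_ne_zero_iff.2 fun σ hσ =>
      zpow_ne_zero _ (sub_ne_zero.2 fun h => hz (by rw [h]; exact hσ))
  -- local analytic nonvanishing representatives of `g` at points of `Z`
  have key : ∀ ρ : ℂ, ∃ gρ : ℂ → ℂ, ρ ∈ Z →
      AnalyticAt ℂ gρ ρ ∧ gρ ρ ≠ 0 ∧ ∀ᶠ z in nhdsWithin ρ {ρ}ᶜ, g z = gρ z := by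
    intro ρ
    by_cases hρ : ρ ∈ Z
    · obtain ⟨hm, hordρ⟩ := hord ρ hρ
      rw [meromorphicOrderAt_eq_int_iff hm] at hordρ
      obtain ⟨gρ, hga, hgne0, hgeq⟩ := hordρ
      refine ⟨fun z => gρ z * ∏ σ ∈ Z.erase ρ, (z - σ) ^ (-ord σ), fun _ => ⟨?_, ?_, ?_⟩⟩
      · exact hga.mul (Finset.analyticAt_fun_prod _ fun σ hσ =>
          analyticAt_zpow_sub (Ne.symm (Finset.mem_erase.1 hσ).1) _)
      · exact mul_ne_zero hgne0 (Finset.prod_ne_zero_iff.2 fun σ hσ =>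
          zpow_ne_zero _ (sub_ne_zero.2 (Ne.symm (Finset.mem_erase.1 hσ).1)))
      · filter_upwards [hgeq, self_mem_nhdsWithin] with z hz1 hz2
        have hzρ : z ≠ ρ := hz2
        have hzsub : z - ρ ≠ 0 := sub_ne_zero.2 hzρ
        have hPz : P z = (z - ρ) ^ (-ord ρ) * ∏ σ ∈ Z.erase ρ, (z - σ) ^ (-ord σ) :=
          (Finset.mul_prod_erase Z _ hρ).symm
        calc g z = ((z - ρ) ^ (ord ρ) * gρ z) *
              ((z - ρ) ^ (-ord ρ) * ∏ σ ∈ Z.erase ρ, (z - σ) ^ (-ord σ)) := by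
              rw [hg]
              simp only [hz1, smul_eq_mul, hPz]
          _ = ((z - ρ) ^ (ord ρ) * (z - ρ) ^ (-ord ρ)) *
              (gρ z * ∏ σ ∈ Z.erase ρ, (z - σ) ^ (-ord σ)) := by ring
          _ = gρ z * ∏ σ ∈ Z.erase ρ, (z - σ) ^ (-ord σ) := by
              rw [← zpow_add₀ hzsub, add_neg_cancel, zpow_zero, one_mul]
    · exact ⟨fun _ => 1, fun h => absurd h hρ⟩
  choose gg hgg using key
  set G : ℂ → ℂ := fun z => if z ∈ Z then gg z z else g z with hGdef
  -- `G` agrees with `g` near points off `Z`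
  have hGg : ∀ z : ℂ, z ∉ Z → G =ᶠ[nhds z] g := by
    intro z hz
    have hopen : IsOpen ((Z : Set ℂ))ᶜ := Z.finite_toSet.isClosed.isOpen_compl
    filter_upwards [hopen.mem_nhds (by simpa using hz)] with w hw
    have hwZ : w ∉ Z := by simpa using hw
    simp only [hGdef, if_neg hwZ]
  -- `G` is analytic on `U`
  have hGan : AnalyticOnNhd ℂ G U := by
    intro z hz
    by_cases hzZ : z ∈ Z
    · obtain ⟨han, hne', hev⟩ := hgg z hzZ
      have h1 : ∀ᶠ w in nhds z, w ∈ ({z}ᶜ : Set ℂ) → g w = gg z w := by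
        rwa [eventually_nhdsWithin_iff] at hev
      have hopen : IsOpen ((Z.erase z : Finset ℂ) : Set ℂ)ᶜ :=
        (Z.erase z).finite_toSet.isClosed.isOpen_compl
      have h2 : ∀ᶠ w in nhds z, w ∉ ((Z.erase z : Finset ℂ) : Set ℂ) :=
        hopen.mem_nhds (by simp)
      have hGev : G =ᶠ[nhds z] gg z := by
        filter_upwards [h1, h2] with w hw1 hw2
        by_cases hwz : w = z
        · subst hwz; simp only [hGdef, if_pos hzZ]
        · have hwZ : w ∉ Z := fun hw => hw2 (by simp only [Finset.coe_erase, Set.mem_diff, Set.mem_singleton_iff]; exact ⟨hw, hwz⟩)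
          simp only [hGdef, if_neg hwZ]
          exact hw1 (by simpa using hwz)
      exact han.congr hGev.symm
    · have hgan : AnalyticAt ℂ g z := by
        rw [hg]
        exact (hf z ⟨hz, hzZ⟩).mul (hPan z hzZ)
      exact hgan.congr (hGg z hzZ).symm
  -- `G` is nonvanishing on the closed ball
  have hGne : ∀ z ∈ closedBall s₀ u, G z ≠ 0 := by
    intro z hz
    by_cases hzZ : z ∈ Z
    · simp only [hGdef, if_pos hzZ]
      exact (hgg z hzZ).2.1
    · simp only [hGdef, if_neg hzZ, hg]
      exact mul_ne_zero (hne z ⟨hz, hzZ⟩) (hPne z hzZ)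
  have hsc : sphere s₀ u ⊆ closedBall s₀ u := sphere_subset_closedBall
  -- the pointwise decomposition on the circle
  have hpt : ∀ z ∈ sphere s₀ u, (z - s₀) * (deriv f z / f z)
      = ((z - s₀) * (deriv G z / G z) + ∑ σ ∈ Z, (ord σ : ℂ))
        + ∑ σ ∈ Z, ((ord σ : ℂ) * (σ - s₀)) * (z - σ)⁻¹ := by
    intro z hz
    have hzZ : z ∉ Z := by
      intro h
      have h1 : dist z s₀ < u := mem_ball.1 (hZ h)
      have h2 : dist z s₀ = u := mem_sphere.1 hz
      exact absurd h2 (ne_of_lt h1)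
    have hzU : z ∈ U := hUB (hsc hz)
    have hfz : f z ≠ 0 := hne z ⟨hsc hz, hzZ⟩
    have hfa : AnalyticAt ℂ f z := hf z ⟨hzU, hzZ⟩
    have hzσ : ∀ σ ∈ Z, z ≠ σ := fun σ hσ h => hzZ (h ▸ hσ)
    have hPz : P z ≠ 0 := hPne z hzZ
    have hGg' := hGg z hzZ
    have hGz : G z = g z := hGg'.eq_of_nhds
    have hdG : deriv G z = deriv g z := hGg'.deriv_eq
    have hlog : logDeriv g z = logDeriv f z + logDeriv P z := by
      rw [hg]
      exact logDeriv_mul z hfz hPz hfa.differentiableAt (hPan z hzZ).differentiableAt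
    have hlogP : logDeriv P z = ∑ σ ∈ Z, -(ord σ : ℂ) / (z - σ) := by
      rw [hP]
      rw [logDeriv_prod (s := Z) (f := fun σ s => (s - σ) ^ (-ord σ)) (x := z)
        (fun σ hσ => zpow_ne_zero _ (sub_ne_zero.2 (hzσ σ hσ)))
        (fun σ hσ => (analyticAt_zpow_sub (hzσ σ hσ) _).differentiableAt)]
      refine Finset.sum_congr rfl fun σ hσ => ?_
      have hdiff : DifferentiableAt ℂ (fun s : ℂ => s - σ) z :=
        differentiableAt_id.sub_const σ
      rw [logDeriv_fun_zpow hdiff]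
      have hld : logDeriv (fun s : ℂ => s - σ) z = 1 / (z - σ) := by
        simp [logDeriv_apply, deriv_sub_const]
      rw [hld]
      push_cast
      ring
    have hmain : deriv f z / f z = deriv G z / G z + ∑ σ ∈ Z, (ord σ : ℂ) / (z - σ) := by
      have h1 : logDeriv f z = logDeriv g z - logDeriv P z := by rw [hlog]; ring
      have h2 : logDeriv g z = deriv G z / G z := by
        rw [logDeriv_apply, hGz, hdG]
      have h3 : ∑ σ ∈ Z, -(ord σ : ℂ) / (z - σ) = -∑ σ ∈ Z, (ord σ : ℂ) / (z - σ) := by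
        rw [← Finset.sum_neg_distrib]
        exact Finset.sum_congr rfl fun σ _ => by ring
      rw [show deriv f z / f z = logDeriv f z from rfl, h1, h2, hlogP, h3]
      ring
    rw [hmain]
    rw [mul_add, Finset.mul_sum, add_assoc]
    congr 1
    rw [← Finset.sum_add_distrib]
    refine Finset.sum_congr rfl fun σ hσ => ?_
    have hzs : z - σ ≠ 0 := sub_ne_zero.2 (hzσ σ hσ)
    field_simp
    ring
  -- rewrite the integral using the decomposition
  set c : ℂ := ∑ σ ∈ Z, (ord σ : ℂ) with hc
  have hcont1 : ContinuousOn (fun z => (z - s₀) * (deriv G z / G z) + c) (closedBall s₀ u) := by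
    have hGc : ContinuousOn G (closedBall s₀ u) := hGan.continuousOn.mono hUB
    have hG'c : ContinuousOn (deriv G) (closedBall s₀ u) := hGan.deriv.continuousOn.mono hUB
    exact (((continuous_id.sub continuous_const).continuousOn).mul
      (hG'c.div hGc hGne)).add continuousOn_const
  have hi1 : CircleIntegrable (fun z => (z - s₀) * (deriv G z / G z) + c) s₀ u :=
    (hcont1.mono hsc).circleIntegrable hu.le
  have hzσs : ∀ z ∈ sphere s₀ u, ∀ σ ∈ Z, z - σ ≠ 0 := by
    intro z hz σ hσ
    refine sub_ne_zero.2 fun h => ?_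
    have h1 : dist z s₀ < u := mem_ball.1 (hZ (h ▸ hσ))
    exact absurd (mem_sphere.1 hz) (ne_of_lt h1)
  have hi2 : ∀ σ ∈ Z, CircleIntegrable (fun z => ((ord σ : ℂ) * (σ - s₀)) * (z - σ)⁻¹) s₀ u := by
    intro σ hσ
    refine ContinuousOn.circleIntegrable hu.le ?_
    exact continuousOn_const.mul (((continuous_id.sub continuous_const).continuousOn).inv₀
      fun z hz => hzσs z hz σ hσ)
  have hi2' : CircleIntegrable (fun z => ∑ σ ∈ Z, ((ord σ : ℂ) * (σ - s₀)) * (z - σ)⁻¹) s₀ u :=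
    circleIntegrable_finset_sum Z _ hi2
  have hsplit : (∮ s in C(s₀, u), (s - s₀) * (deriv f s / f s))
      = (∮ s in C(s₀, u), ((s - s₀) * (deriv G s / G s) + c))
        + ∮ s in C(s₀, u), ∑ σ ∈ Z, ((ord σ : ℂ) * (σ - s₀)) * (s - σ)⁻¹ := by
    rw [← circleIntegral_add' hi1 hi2']
    exact circleIntegral.integral_congr hu.le fun z hz => hpt z hz
  have hzero : (∮ s in C(s₀, u), ((s - s₀) * (deriv G s / G s) + c)) = 0 := by
    refine Complex.circleIntegral_eq_zero_of_differentiable_on_off_countable hu.le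
      Set.countable_empty hcont1 fun z hz => ?_
    have hzU : z ∈ U := hUB (ball_subset_closedBall hz.1)
    have hGz : G z ≠ 0 := hGne z (ball_subset_closedBall hz.1)
    exact ((differentiableAt_id.sub_const s₀).mul
      (((hGan.deriv z hzU).differentiableAt).div ((hGan z hzU).differentiableAt) hGz)).add_const c
  have hsum : (∮ s in C(s₀, u), ∑ σ ∈ Z, ((ord σ : ℂ) * (σ - s₀)) * (s - σ)⁻¹)
      = ∑ σ ∈ Z, ((ord σ : ℂ) * (σ - s₀)) * (2 * Real.pi * Complex.I) := by
    rw [circleIntegral_finset_sum Z _ hi2]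
    refine Finset.sum_congr rfl fun σ hσ => ?_
    rw [circleIntegral.integral_const_mul]
    rw [circleIntegral.integral_sub_inv_of_mem_ball (hZ hσ)]
  rw [hsplit, hzero, hsum, zero_add, Finset.mul_sum]
  refine Finset.sum_congr rfl fun σ hσ => ?_
  have h2pi : (2 * Real.pi * Complex.I : ℂ) ≠ 0 := Complex.two_pi_I_ne_zero
  rw [mul_comm ((ord σ : ℂ) * (σ - s₀)) _, ← mul_assoc, inv_mul_cancel₀ h2pi, one_mul]
end

section
/- Reflection symmetry of a weighted log-derivative integral: let f be holomorphic and nonvanishing on a neighborhood of the closed disc B̄(s_j, u) with center s_j on the line Re(s)=1/2, and suppose f(conj s) = conj(f(s)) and f(1-s) = 1/f(s) on this neighborhood. Let Λ be the left half of ∂B(s_j,u) (the arc with Re(s) ≤ 1/2) traversed counterclockwise together with the vertical diameter, as in the contour s_j + u e^{it}, π/2 ≤ t ≤ 3π/2, followed by s_j + it, -u ≤ t ≤ u. Then the conjugate of ∫_Λ (s - s_j) f'(s)/f(s) ds equals minus the integral of (s - s_j) f'(s)/f(s) over the image of Λ under s ↦ 1 - conj(s) traversed with reversed orientation, and the sum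 of the two contour integrals equals ∮_{∂B(s_j,u)} (s - s_j) f'(s)/f(s) ds. -/
open Complex Metric intervalIntegral Real

lemma conj_intervalIntegral (f : ℝ → ℂ) (a b : ℝ) :
    (starRingEnd ℂ) (∫ t in a..b, f t) = ∫ t in a..b, (starRingEnd ℂ) (f t) := by
  simp only [intervalIntegral, map_sub, ← integral_conj]

lemma hasDerivAt_conj_conj {f : ℂ → ℂ} {d z : ℂ}
    (h : HasDerivAt f d ((starRingEnd ℂ) z)) :
    HasDerivAt (fun w => (starRingEnd ℂ) (f ((starRingEnd ℂ) w))) ((starRingEnd ℂ) d) z := by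
  rw [hasDerivAt_iff_tendsto_slope] at h ⊢
  have hc : Continuous (starRingEnd ℂ) := Complex.continuous_conj
  have h1 : Filter.Tendsto (starRingEnd ℂ) (nhdsWithin z {z}ᶜ)
      (nhdsWithin ((starRingEnd ℂ) z) {(starRingEnd ℂ) z}ᶜ) := by
    apply tendsto_nhdsWithin_of_tendsto_nhds_of_eventually_within
    · exact (hc.tendsto z).mono_left nhdsWithin_le_nhds
    · filter_upwards [eventually_mem_nhdsWithin] with w hw
      simp only [Set.mem_compl_iff, Set.mem_singleton_iff] at hw ⊢
      intro hcontra
      exact hw (by simpa using congrArg (starRingEnd ℂ) hcontra)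
  have h2 := (hc.tendsto d).comp (h.comp h1)
  refine h2.congr (fun w => ?_)
  simp only [Function.comp_apply, slope_def_field, map_div₀, map_sub, Complex.conj_conj]

/-- Reflection symmetry of the weighted log-derivative integral over the half-circle
contour `Λ` (left semicircle `s_j + u e^{it}`, `π/2 ≤ t ≤ 3π/2`, followed by the vertical
diameter `s_j + it`, `-u ≤ t ≤ u`).  The conjugate of `∫_Λ (s-s_j) f'(s)/f(s) ds` equals
minus the integral over the image of `Λ` under `s ↦ 1 - conj s` with reversed orientation,
and the sum of the two contour integrals is the full circle integral. -/
theorem reflection_symmetry_log_derivative_integral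
    (t_j : ℝ) (s_j : ℂ) (hsj : s_j = 1/2 + t_j * Complex.I)
    (u : ℝ) (hu : 0 < u)
    (U : Set ℂ) (hU : IsOpen U) (hUB : closedBall s_j u ⊆ U)
    (hUconj : ∀ s ∈ U, (starRingEnd ℂ) s ∈ U) (hUsym : ∀ s ∈ U, (1 - s) ∈ U)
    (f : ℂ → ℂ) (hf : DifferentiableOn ℂ f U) (hne : ∀ s ∈ U, f s ≠ 0)
    (hreal : ∀ s ∈ U, f ((starRingEnd ℂ) s) = (starRingEnd ℂ) (f s))
    (hfe : ∀ s ∈ U, f s * f (1 - s) = 1)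
    (g : ℂ → ℂ) (hg : ∀ s : ℂ, g s = (s - s_j) * (deriv f s / f s))
    -- the integral over Λ
    (LambdaInt : ℂ)
    (hLambda : LambdaInt =
      (∫ t in (Real.pi/2)..(3*Real.pi/2),
          g (s_j + u * Complex.exp (t * Complex.I)) * (u * Complex.I * Complex.exp (t * Complex.I)))
        + ∫ t in (-u)..u, g (s_j + t * Complex.I) * Complex.I)
    -- the integral over the image of Λ under s ↦ 1 - conj s, traversed with REVERSED
    -- orientation (the forward image of the arc is `t ↦ s_j - u e^{-it}` and of the
    -- diameter is `t ↦ s_j + it`; reversal negates the forward integral)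
    (ReflRevInt : ℂ)
    (hRefl : ReflRevInt = -(
      (∫ t in (Real.pi/2)..(3*Real.pi/2),
          g (s_j - u * Complex.exp (-(t * Complex.I))) * (u * Complex.I * Complex.exp (-(t * Complex.I))))
        + ∫ t in (-u)..u, g (s_j + t * Complex.I) * Complex.I)) :
    (starRingEnd ℂ) LambdaInt = -ReflRevInt ∧
    LambdaInt + ReflRevInt = ∮ s in C(s_j, u), g s := by
  have hgfun : g = fun s => (s - s_j) * (deriv f s / f s) := funext hg
  -- conj s_j = 1 - s_j
  have hconj_sj : (starRingEnd ℂ) s_j = 1 - s_j := by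
    rw [hsj, map_add, map_div₀, map_one, map_ofNat, map_mul, Complex.conj_ofReal,
      Complex.conj_I]; ring
  -- membership of contour points
  have harc : ∀ t : ℝ, s_j + u * Complex.exp (t * Complex.I) ∈ U := by
    intro t
    apply hUB
    simp only [mem_closedBall, Complex.dist_eq, add_sub_cancel_left, map_mul,
      norm_mul, Complex.norm_real, Real.norm_eq_abs, Complex.norm_exp_ofReal_mul_I, mul_one, abs_of_pos hu, le_refl]
  have harc2 : ∀ t : ℝ, s_j - u * Complex.exp (-(t * Complex.I)) ∈ U := by
    intro t
    apply hUB
    have : -((t:ℂ) * Complex.I) = ((-t : ℝ) : ℂ) * Complex.I := by push_cast; ring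
    rw [this]
    simp only [mem_closedBall, Complex.dist_eq, sub_sub_cancel_left, norm_neg, map_mul,
      norm_mul, Complex.norm_real, Real.norm_eq_abs, Complex.norm_exp_ofReal_mul_I, mul_one, abs_of_pos hu, le_refl]
  have hdiam : ∀ t ∈ Set.uIcc (-u) u, s_j + (t:ℂ) * Complex.I ∈ U := by
    intro t ht
    apply hUB
    rw [Set.uIcc_of_le (by linarith)] at ht
    simp only [mem_closedBall, Complex.dist_eq, add_sub_cancel_left, map_mul,
      norm_mul, Complex.norm_real, Real.norm_eq_abs, Complex.norm_I, mul_one]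
    exact abs_le.2 ⟨ht.1, ht.2⟩
  -- continuity of g on U
  have hfan : AnalyticOnNhd ℂ f U := hf.analyticOnNhd hU
  have hg_cont : ContinuousOn g U := by
    rw [hgfun]
    exact ((continuousOn_id.sub continuousOn_const).mul
      ((hfan.deriv.continuousOn).div hf.continuousOn hne))
  -- the key pointwise identity
  have key : ∀ s ∈ U, (starRingEnd ℂ) (g s) = -g (1 - (starRingEnd ℂ) s) := by
    intro s hs
    have hcs : (starRingEnd ℂ) s ∈ U := hUconj s hs
    have h1cs : 1 - (starRingEnd ℂ) s ∈ U := hUsym _ hcs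
    have hfd : HasDerivAt f (deriv f s) s :=
      (hf.differentiableAt (hU.mem_nhds hs)).hasDerivAt
    have hF : HasDerivAt (fun w => (starRingEnd ℂ) (f ((starRingEnd ℂ) w)))
        ((starRingEnd ℂ) (deriv f s)) ((starRingEnd ℂ) s) :=
      hasDerivAt_conj_conj (by simpa using hfd)
    have heq : (fun w => (starRingEnd ℂ) (f ((starRingEnd ℂ) w)))
        =ᶠ[nhds ((starRingEnd ℂ) s)] f := by
      filter_upwards [hU.mem_nhds hcs] with w hw
      rw [hreal w hw, Complex.conj_conj]
    have hfd' : HasDerivAt f ((starRingEnd ℂ) (deriv f s)) ((starRingEnd ℂ) s) :=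
      hF.congr_of_eventuallyEq heq.symm
    have hdconj : deriv f ((starRingEnd ℂ) s) = (starRingEnd ℂ) (deriv f s) := hfd'.deriv
    -- the functional-equation derivative identity at w := conj s
    set w : ℂ := (starRingEnd ℂ) s with hw
    have hfdw : HasDerivAt f (deriv f w) w :=
      (hf.differentiableAt (hU.mem_nhds hcs)).hasDerivAt
    have hfd1w : HasDerivAt f (deriv f (1 - w)) (1 - w) :=
      (hf.differentiableAt (hU.mem_nhds h1cs)).hasDerivAt
    have hcomp : HasDerivAt (fun x => f (1 - x)) (deriv f (1 - w) * (-1)) w :=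
      HasDerivAt.comp w hfd1w ((hasDerivAt_id w).const_sub 1)
    have hprod : HasDerivAt (fun x => f x * f (1 - x))
        (deriv f w * f (1 - w) + f w * (deriv f (1 - w) * (-1))) w := hfdw.mul hcomp
    have hone : HasDerivAt (fun x : ℂ => f x * f (1 - x)) 0 w := by
      have hopen : IsOpen (U ∩ (fun x : ℂ => 1 - x) ⁻¹' U) :=
        hU.inter ((continuous_const.sub continuous_id).isOpen_preimage U hU)
      have hmem : w ∈ U ∩ (fun x : ℂ => 1 - x) ⁻¹' U := ⟨hcs, hUsym _ hcs⟩
      have : (fun x : ℂ => f x * f (1 - x)) =ᶠ[nhds w] (fun _ => (1:ℂ)) := by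
        filter_upwards [hopen.mem_nhds hmem] with x hx
        exact hfe x hx.1
      exact (hasDerivAt_const w (1:ℂ)).congr_of_eventuallyEq this
    have huniq : deriv f w * f (1 - w) + f w * (deriv f (1 - w) * (-1)) = 0 :=
      hprod.unique hone
    have hratio : deriv f w / f w = deriv f (1 - w) / f (1 - w) := by
      rw [div_eq_div_iff (hne w hcs) (hne _ h1cs)]
      linear_combination huniq
    -- final computation
    rw [hg, hg, map_mul, map_sub, map_div₀, hconj_sj, ← hw, ← hdconj, ← hreal s hs, ← hw,
      hratio]
    ring
  -- arc integrand rewrite under conj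
  have hconj_arc : ∀ t : ℝ,
      (starRingEnd ℂ) (g (s_j + u * Complex.exp (t * Complex.I)) *
        (u * Complex.I * Complex.exp (t * Complex.I)))
      = g (s_j - u * Complex.exp (-(t * Complex.I))) *
        (u * Complex.I * Complex.exp (-(t * Complex.I))) := by
    intro t
    have h1 : (starRingEnd ℂ) (s_j + u * Complex.exp (t * Complex.I))
        = (1 - s_j) + u * Complex.exp (-(t * Complex.I)) := by
      rw [map_add, hconj_sj, map_mul, Complex.conj_ofReal, ← Complex.exp_conj]
      congr 2
      simp [Complex.conj_I, Complex.conj_ofReal]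
    have h2 : 1 - ((1 - s_j) + u * Complex.exp (-(t * Complex.I)))
        = s_j - u * Complex.exp (-(t * Complex.I)) := by ring
    rw [map_mul, key _ (harc t), h1, h2, map_mul, map_mul, Complex.conj_ofReal,
      Complex.conj_I, ← Complex.exp_conj]
    have h3 : (starRingEnd ℂ) ((t:ℂ) * Complex.I) = -((t:ℂ) * Complex.I) := by
      simp [Complex.conj_I, Complex.conj_ofReal]
    rw [h3]; ring
  -- diameter integrand rewrite under conj
  have hconj_diam : ∀ t ∈ Set.uIcc (-u) u,
      (starRingEnd ℂ) (g (s_j + (t:ℂ) * Complex.I) * Complex.I)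
      = g (s_j + (t:ℂ) * Complex.I) * Complex.I := by
    intro t ht
    have h1 : 1 - (starRingEnd ℂ) (s_j + (t:ℂ) * Complex.I) = s_j + (t:ℂ) * Complex.I := by
      rw [map_add, hconj_sj, map_mul, Complex.conj_ofReal, Complex.conj_I]; ring
    rw [map_mul, key _ (hdiam t ht), h1, Complex.conj_I]; ring
  -- Claim 1
  have claim1 : (starRingEnd ℂ) LambdaInt = -ReflRevInt := by
    rw [hLambda, hRefl, map_add, neg_neg, conj_intervalIntegral, conj_intervalIntegral]
    congr 1
    · exact intervalIntegral.integral_congr (fun t _ => hconj_arc t)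
    · exact intervalIntegral.integral_congr hconj_diam
  refine ⟨claim1, ?_⟩
  -- Claim 2
  set K : ℝ → ℂ := fun t => g (s_j + u * Complex.exp (t * Complex.I)) *
    (u * Complex.I * Complex.exp (t * Complex.I)) with hK
  have hKcont : Continuous K := by
    apply Continuous.mul
    · exact hg_cont.comp_continuous
        (continuous_const.add (continuous_const.mul
          (Complex.continuous_exp.comp (Complex.continuous_ofReal.mul continuous_const))))
        harc
    · exact continuous_const.mul (Complex.continuous_exp.comp
        (Complex.continuous_ofReal.mul continuous_const))
  -- reflected arc integrand = -K (π - t)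
  have hrefl_eq : ∀ t : ℝ,
      g (s_j - u * Complex.exp (-(t * Complex.I))) *
        (u * Complex.I * Complex.exp (-(t * Complex.I))) = -K (Real.pi - t) := by
    intro t
    have he : Complex.exp (((Real.pi - t : ℝ) : ℂ) * Complex.I)
        = -Complex.exp (-((t:ℂ) * Complex.I)) := by
      push_cast
      rw [sub_mul, Complex.exp_sub, Complex.exp_pi_mul_I, Complex.exp_neg, neg_div, one_div]
    simp only [hK, he, mul_neg, ← sub_eq_add_neg]
    ring
  have hsub : (∫ t in (Real.pi/2)..(3*Real.pi/2), K (Real.pi - t))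
      = ∫ t in (-(Real.pi/2))..(Real.pi/2), K t := by
    rw [intervalIntegral.integral_comp_sub_left K Real.pi]
    congr 1 <;> ring
  have harcadd : (∫ t in (-(Real.pi/2))..(Real.pi/2), K t)
      + (∫ t in (Real.pi/2)..(3*Real.pi/2), K t)
      = ∫ t in (-(Real.pi/2))..(3*Real.pi/2), K t :=
    intervalIntegral.integral_add_adjacent_intervals
      (hKcont.intervalIntegrable _ _) (hKcont.intervalIntegrable _ _)
  have hper : Function.Periodic K (2*Real.pi) := by
    intro t
    have he2 : Complex.exp (((t + 2*Real.pi : ℝ) : ℂ) * Complex.I)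
        = Complex.exp ((t:ℂ) * Complex.I) := by
      push_cast
      rw [add_mul, Complex.exp_add, Complex.exp_two_pi_mul_I, mul_one]
    simp only [hK, he2]
  have hfull : (∫ t in (-(Real.pi/2))..(3*Real.pi/2), K t)
      = ∫ t in (0:ℝ)..(2*Real.pi), K t := by
    have h := hper.intervalIntegral_add_eq (-(Real.pi/2)) 0
    rw [show -(Real.pi/2) + 2*Real.pi = 3*Real.pi/2 by ring, zero_add] at h
    exact h
  have hcirc : (∮ s in C(s_j, u), g s) = ∫ t in (0:ℝ)..(2*Real.pi), K t := by
    rw [circleIntegral]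
    apply intervalIntegral.integral_congr
    intro t _
    simp only [deriv_circleMap, circleMap, smul_eq_mul, hK, zero_add]
    ring
  have hA2 : (∫ t in (Real.pi/2)..(3*Real.pi/2),
      g (s_j - u * Complex.exp (-(t * Complex.I))) *
        (u * Complex.I * Complex.exp (-(t * Complex.I))))
      = -∫ t in (-(Real.pi/2))..(Real.pi/2), K t := by
    rw [← hsub, ← intervalIntegral.integral_neg]
    exact intervalIntegral.integral_congr fun t _ => by rw [hrefl_eq t]
  rw [hLambda, hRefl, hA2, hcirc, ← hfull, ← harcadd]
  ring
end

section
/- If m : Γ → ℂ is an additive homomorphism on a group Γ acting on a set H, and u : H → ℂ is Γ-invariant, then for a function c : H → ℂ satisfying c(γz) = c(z) + m(γ) for all γ, z, the function z ↦ c(z)^n · u(z) belongs to Aⁿ_Γ (n-th order automorphic functions) for every n ≥ 0. -/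
/-- The space of `n`-th order automorphic functions: `A⁰` consists of the `Γ`-invariant
functions, and `Aⁿ` of the functions `f` with `f(γ·) - f ∈ A^{n-1}` for all `γ`. -/
def HigherOrderAut (Γ : Type*) [Group Γ] {H : Type*} [MulAction Γ H] :
    ℕ → Set (H → ℂ)
  | 0 => {f | ∀ (γ : Γ) (z : H), f (γ • z) = f z}
  | (n + 1) => {f | ∀ γ : Γ, (fun z => f (γ • z) - f z) ∈ HigherOrderAut Γ n}

lemma higherOrderAut_congr {Γ : Type*} [Group Γ] {H : Type*} [MulAction Γ H]
    {n : ℕ} {f g : H → ℂ} (h : ∀ z, f z = g z) (hf : f ∈ HigherOrderAut Γ n) :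
    g ∈ HigherOrderAut Γ n := by
  have : f = g := funext h
  rwa [this] at hf

lemma higherOrderAut_add {Γ : Type*} [Group Γ] {H : Type*} [MulAction Γ H] :
    ∀ (n : ℕ) (f g : H → ℂ), f ∈ HigherOrderAut Γ n → g ∈ HigherOrderAut Γ n →
      (fun z => f z + g z) ∈ HigherOrderAut Γ n := by
  intro n
  induction n with
  | zero => intro f g hf hg γ z; simp [hf γ z, hg γ z]
  | succ n ih =>
    intro f g hf hg γ
    have := ih _ _ (hf γ) (hg γ)
    exact higherOrderAut_congr (fun z => by ring) this

lemma higherOrderAut_smul {Γ : Type*} [Group Γ] {H : Type*} [MulAction Γ H] :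
    ∀ (n : ℕ) (a : ℂ) (f : H → ℂ), f ∈ HigherOrderAut Γ n →
      (fun z => a * f z) ∈ HigherOrderAut Γ n := by
  intro n
  induction n with
  | zero => intro a f hf γ z; simp [hf γ z]
  | succ n ih =>
    intro a f hf γ
    have := ih a _ (hf γ)
    exact higherOrderAut_congr (fun z => by ring) this

lemma higherOrderAut_zero_mem {Γ : Type*} [Group Γ] {H : Type*} [MulAction Γ H] :
    ∀ (n : ℕ), (fun _ : H => (0 : ℂ)) ∈ HigherOrderAut Γ n := by
  intro n
  induction n with
  | zero => intro γ z; rfl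
  | succ n ih =>
    intro γ
    exact higherOrderAut_congr (fun z => by ring) ih

lemma higherOrderAut_sum {Γ : Type*} [Group Γ] {H : Type*} [MulAction Γ H]
    {ι : Type*} (n : ℕ) (s : Finset ι) (F : ι → H → ℂ)
    (hF : ∀ i ∈ s, F i ∈ HigherOrderAut Γ n) :
    (fun z => ∑ i ∈ s, F i z) ∈ HigherOrderAut Γ n := by
  classical
  induction s using Finset.induction_on with
  | empty => simpa using higherOrderAut_zero_mem n
  | @insert a s ha ih =>
    have h1 := hF a (Finset.mem_insert_self a s)
    have h2 := ih (fun i his => hF i (Finset.mem_insert_of_mem his))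
    have := higherOrderAut_add n _ _ h1 h2
    exact higherOrderAut_congr (fun z => by rw [Finset.sum_insert ha]) this

/-- If `c` satisfies the cocycle property `c(γz) = c(z) + m(γ)` for an additive
homomorphism `m`, and `u` is `Γ`-invariant, then `z ↦ c(z)ⁿ u(z)` is an `n`-th order
automorphic function. -/
theorem cocycle_pow_mul_invariant_mem_higherOrderAut
    {Γ : Type*} [Group Γ] {H : Type*} [MulAction Γ H]
    (m : Γ → ℂ) (hm : ∀ γ₁ γ₂ : Γ, m (γ₁ * γ₂) = m γ₁ + m γ₂)
    (u : H → ℂ) (hu : ∀ (γ : Γ) (z : H), u (γ • z) = u z)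
    (c : H → ℂ) (hc : ∀ (γ : Γ) (z : H), c (γ • z) = c z + m γ) :
    ∀ n : ℕ, (fun z => (c z) ^ n * u z) ∈ HigherOrderAut Γ n := by
  have key : ∀ n : ℕ, ∀ k ≤ n, (fun z => (c z) ^ k * u z) ∈ HigherOrderAut Γ n := by
    intro n
    induction n with
    | zero =>
      intro k hk
      interval_cases k
      intro γ z
      simp [hu γ z]
    | succ n ih =>
      intro k hk γ
      have expand : ∀ z : H, c (γ • z) ^ k * u (γ • z) - c z ^ k * u z =
          ∑ i ∈ Finset.range k, ((k.choose i : ℂ) * m γ ^ (k - i)) * (c z ^ i * u z) := by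
        intro z
        rw [hc γ z, hu γ z, add_pow]
        rw [Finset.sum_range_succ]
        simp only [Nat.sub_self, pow_zero, Nat.choose_self, Nat.cast_one, mul_one]
        rw [add_mul, add_sub_cancel_right, Finset.sum_mul]
        exact Finset.sum_congr rfl fun i _ => by ring
      refine higherOrderAut_congr (fun z => (expand z).symm) ?_
      exact higherOrderAut_sum n _ _ fun i hi =>
        higherOrderAut_smul n _ _ (ih i (by have := Finset.mem_range.mp hi; omega))
  intro n
  exact key n n le_rfl
end
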